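/- Let Λ > 0, K ≥ 1, u₁ > 0, and set α := (1/2)√(ΛK/3), r_c⁺ := √(3K/Λ) = K/(2α). Let r : [0,u₁] → ℝ be differentiable with −(1/2)(K − (Λ/3) r(u)²) ≤ r'(u) ≤ −(1/2)(1 − (ΛK/3) r(u)²) for all u ∈ [0,u₁], and suppose r(u₁) =: r₁ > r_c⁺. Define c⁻ := u₁ + (1/α)·arcoth(2α r₁) and c⁺ := u₁ + (1/α)·arcoth(2α r₁/K). Then for every u ∈ [0,u₁], (1/(2α))·coth(α(c⁻ − u)) ≤ r(u) ≤ (K/(2α))·coth(α(c⁺ − u)). -/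

import Mathlib

noncomputable section

open Real Set

/-- Hyperbolic cotangent: `coth x = cosh x / sinh x`. -/
def coth (x : ℝ) : ℝ := Real.cosh x / Real.sinh x

/-- Inverse hyperbolic cotangent on `(1,∞)`: `arcoth y = (1/2)·log((y+1)/(y−1))`. -/
def arcoth (y : ℝ) : ℝ := (1 / 2) * Real.log ((y + 1) / (y - 1))



lemma sinh_pos' {t : ℝ} (ht : 0 < t) : 0 < Real.sinh t := Real.sinh_pos_iff.2 ht

lemma coth_pos {t : ℝ} (ht : 0 < t) : 0 < coth t :=
  div_pos (Real.cosh_pos t) (sinh_pos' ht)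

lemma arcoth_pos {y : ℝ} (hy : 1 < y) : 0 < arcoth y := by
  have h1 : 0 < y - 1 := by linarith
  have : 1 < (y + 1) / (y - 1) := by
    rw [lt_div_iff₀ h1]; linarith
  have := Real.log_pos this
  unfold arcoth; linarith

lemma coth_arcoth {y : ℝ} (hy : 1 < y) : coth (arcoth y) = y := by
  have h1 : 0 < y - 1 := by linarith
  have hA : 0 < (y + 1) / (y - 1) := by positivity
  have hs : Real.exp (arcoth y) ^ 2 = (y + 1) / (y - 1) := by
    rw [← Real.exp_nat_mul]
    unfold arcoth
    rw [show ((2:ℕ):ℝ) * ((1:ℝ)/2 * Real.log ((y+1)/(y-1))) = Real.log ((y+1)/(y-1)) by push_cast; ring]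
    exact Real.exp_log hA
  set s := Real.exp (arcoth y) with hsdef
  have hs0 : 0 < s := Real.exp_pos _
  have hsinh : Real.sinh (arcoth y) = (s - s⁻¹) / 2 := by
    rw [Real.sinh_eq, ← Real.exp_neg]
  have hcosh : Real.cosh (arcoth y) = (s + s⁻¹) / 2 := by
    rw [Real.cosh_eq, ← Real.exp_neg]
  have hs2 : s ^ 2 = (y + 1) / (y - 1) := hs
  unfold coth
  rw [hsinh, hcosh]
  have hyne : y - 1 ≠ 0 := ne_of_gt h1
  have hden : s - s⁻¹ ≠ 0 := by
    have : s⁻¹ < s := by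
      have h1s : 1 < s ^ 2 := by rw [hs2, lt_div_iff₀ h1]; linarith
      have h1s' : 1 < s := by nlinarith [hs0]
      calc s⁻¹ < 1 := inv_lt_one_of_one_lt₀ h1s'
        _ < s := h1s'
    linarith
  have hsne : s ≠ 0 := ne_of_gt hs0
  have hs2' : s ^ 2 * (y - 1) = y + 1 := by
    field_simp at hs2; linarith [hs2]
  rw [div_div_div_cancel_right₀, div_eq_iff hden]
  · field_simp
    nlinarith [hs2']
  · norm_num

lemma hasDerivAt_coth {t : ℝ} (ht : Real.sinh t ≠ 0) :
    HasDerivAt coth (1 - coth t ^ 2) t := by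
  have h := (Real.hasDerivAt_cosh t).div (Real.hasDerivAt_sinh t) ht
  refine h.congr_deriv (Eq.symm ?_)
  have hsq : Real.cosh t ^ 2 - Real.sinh t ^ 2 = 1 := Real.cosh_sq_sub_sinh_sq t
  unfold coth
  field_simp


lemma nonneg_of_deriv_le {a b C : ℝ} {h h' : ℝ → ℝ}
    (hab : a ≤ b)
    (hd : ∀ u ∈ Icc a b, HasDerivWithinAt h (h' u) (Icc a b) u)
    (hC : ∀ u ∈ Icc a b, h u ≤ 0 → h' u + C * h u ≤ 0)
    (hb0 : h b = 0) : ∀ u ∈ Icc a b, 0 ≤ h u := by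
  have hcont : ContinuousOn h (Icc a b) := fun x hx => (hd x hx).continuousWithinAt
  intro u₀ hu₀
  by_contra hneg
  push_neg at hneg
  have hu₀b : u₀ ≤ b := hu₀.2
  have hu₀a : a ≤ u₀ := hu₀.1
  -- the set of zeros of h to the right of u₀
  set S : Set ℝ := Icc u₀ b ∩ h ⁻¹' {0} with hS
  have hScl : IsClosed S :=
    (hcont.mono (Icc_subset_Icc hu₀a le_rfl)).preimage_isClosed_of_isClosed
      isClosed_Icc isClosed_singleton
  have hSne : S.Nonempty := ⟨b, ⟨hu₀b, le_rfl⟩, hb0⟩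
  have hSbdd : BddBelow S := ⟨u₀, fun x hx => hx.1.1⟩
  set t := sInf S with ht
  have htS : t ∈ S := hScl.csInf_mem hSne hSbdd
  have ht0 : h t = 0 := htS.2
  have htmem : t ∈ Icc u₀ b := htS.1
  have hu₀t : u₀ < t := by
    rcases lt_or_eq_of_le htmem.1 with h1 | h1
    · exact h1
    · exfalso; rw [← h1] at ht0; linarith
  -- h < 0 on [u₀, t)
  have hneg' : ∀ v ∈ Ico u₀ t, h v < 0 := by
    intro v hv
    by_contra hge
    push_neg at hge
    have hvb : v ≤ b := le_trans hv.2.le htmem.2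
    have : (0:ℝ) ∈ Icc (h u₀) (h v) := ⟨hneg.le, hge⟩
    obtain ⟨w, hw, hw0⟩ := intermediate_value_Icc hv.1
      (hcont.mono (Icc_subset_Icc hu₀a hvb)) this
    have hwS : w ∈ S := ⟨⟨hw.1, le_trans hw.2 hvb⟩, hw0⟩
    have := csInf_le hSbdd hwS
    have : t ≤ v := le_trans this hw.2
    exact absurd hv.2 (not_lt.2 this)
  -- g = h * exp(C u) is antitone on [u₀, t]
  set g : ℝ → ℝ := fun u => h u * Real.exp (C * u) with hg
  have hsub : Icc u₀ t ⊆ Icc a b := Icc_subset_Icc hu₀a htmem.2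
  have hgc : ContinuousOn g (Icc u₀ t) :=
    (hcont.mono hsub).mul ((Real.continuous_exp.comp (continuous_const.mul continuous_id)).continuousOn)
  have hderiv : ∀ x ∈ Ioo u₀ t, HasDerivAt g ((h' x + C * h x) * Real.exp (C * x)) x := by
    intro x hx
    have hxm : x ∈ Icc a b := hsub ⟨hx.1.le, hx.2.le⟩
    have hxint : Icc a b ∈ nhds x := by
      apply Icc_mem_nhds
      · exact lt_of_le_of_lt hu₀a hx.1
      · exact lt_of_lt_of_le hx.2 htmem.2
    have hdx : HasDerivAt h (h' x) x := (hd x hxm).hasDerivAt hxint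
    have he : HasDerivAt (fun u => Real.exp (C * u)) (C * Real.exp (C * x)) x := by
      have := (Real.hasDerivAt_exp (C * x)).comp x ((hasDerivAt_id x).const_mul C)
      exact this.congr_deriv (by ring)
    have := hdx.mul he
    refine this.congr_deriv ?_
    ring
  have hanti : AntitoneOn g (Icc u₀ t) := by
    apply antitoneOn_of_deriv_nonpos (convex_Icc u₀ t) hgc
    · intro x hx
      rw [interior_Icc] at hx
      exact (hderiv x hx).differentiableAt.differentiableWithinAt
    · intro x hx
      rw [interior_Icc] at hx
      rw [(hderiv x hx).deriv]
      have hxm : x ∈ Icc a b := hsub ⟨hx.1.le, hx.2.le⟩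
      have hxneg : h x < 0 := hneg' x ⟨hx.1.le, hx.2⟩
      have := hC x hxm hxneg.le
      have hexp : (0:ℝ) < Real.exp (C * x) := Real.exp_pos _
      exact mul_nonpos_of_nonpos_of_nonneg this hexp.le
  have h1 : g t ≤ g u₀ :=
    hanti ⟨le_rfl, hu₀t.le⟩ ⟨hu₀t.le, le_rfl⟩ hu₀t.le
  have h2 : g t = 0 := by simp [hg, ht0]
  have h3 : g u₀ < 0 := mul_neg_of_neg_of_pos hneg (Real.exp_pos _)
  linarith

set_option maxHeartbeats 1000000 in
/-- Bounds for characteristics in the cosmological region `r₁ > r_c⁺`: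
a differentiable `r` with `−(1/2)(K − (Λ/3)r²) ≤ r' ≤ −(1/2)(1 − (ΛK/3)r²)` on `[0,u₁]`
and `r(u₁) = r₁ > r_c⁺ = √(3K/Λ) = K/(2α)` is sandwiched between explicit coth profiles,
with `α = (1/2)√(ΛK/3)`, `c⁻ = u₁ + arcoth(2αr₁)/α`, `c⁺ = u₁ + arcoth(2αr₁/K)/α`. -/

theorem characteristics_cosmological_region
    (Λ K u₁ : ℝ) (hΛ : 0 < Λ) (hK : 1 ≤ K) (hu : 0 < u₁)
    (r r' : ℝ → ℝ)
    (hd : ∀ u ∈ Icc (0:ℝ) u₁, HasDerivWithinAt r (r' u) (Icc 0 u₁) u)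
    (hlow : ∀ u ∈ Icc (0:ℝ) u₁, -(1 / 2) * (K - Λ / 3 * r u ^ 2) ≤ r' u)
    (hhigh : ∀ u ∈ Icc (0:ℝ) u₁, r' u ≤ -(1 / 2) * (1 - Λ * K / 3 * r u ^ 2))
    (hr₁ : Real.sqrt (3 * K / Λ) < r u₁)
    (α cm cp : ℝ)
    (hα : α = (1 / 2) * Real.sqrt (Λ * K / 3))
    (hcm : cm = u₁ + (1 / α) * arcoth (2 * α * r u₁))
    (hcp : cp = u₁ + (1 / α) * arcoth (2 * α * r u₁ / K)) :
    ∀ u ∈ Icc (0:ℝ) u₁,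
      (1 / (2 * α)) * coth (α * (cm - u)) ≤ r u ∧
      r u ≤ (K / (2 * α)) * coth (α * (cp - u)) := by
  have hK0 : (0:ℝ) < K := lt_of_lt_of_le one_pos hK
  have hΛK : (0:ℝ) < Λ * K / 3 := by positivity
  have hα0 : 0 < α := by
    have := Real.sqrt_pos.2 hΛK
    rw [hα]; linarith
  have h4 : 4 * α ^ 2 = Λ * K / 3 := by
    rw [hα, mul_pow, Real.sq_sqrt hΛK.le]; ring
  have h2a : 2 * α = Real.sqrt (Λ * K / 3) := by rw [hα]; ring
  have hKsq : Λ * K / 3 * (3 * K / Λ) = K ^ 2 := by field_simp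
  have hK2α : 2 * α * Real.sqrt (3 * K / Λ) = K := by
    rw [h2a, ← Real.sqrt_mul hΛK.le, hKsq, Real.sqrt_sq hK0.le]
  have hKlt : K < 2 * α * r u₁ := by
    calc K = 2 * α * Real.sqrt (3 * K / Λ) := hK2α.symm
      _ < 2 * α * r u₁ := by
        apply mul_lt_mul_of_pos_left hr₁; linarith
  have h1lt : (1:ℝ) < 2 * α * r u₁ := lt_of_le_of_lt hK hKlt
  have h1lt' : (1:ℝ) < 2 * α * r u₁ / K := (one_lt_div hK0).2 hKlt
  -- continuity & minimum of r
  have hrc : ContinuousOn r (Icc 0 u₁) := fun x hx => (hd x hx).continuousWithinAt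
  obtain ⟨xm, hxm, hmin⟩ := isCompact_Icc.exists_isMinOn (nonempty_Icc.2 hu.le) hrc
  set m := r xm with hm
  have hmle : ∀ u ∈ Icc (0:ℝ) u₁, m ≤ r u := fun u hu' => hmin hu'
  -- the lower comparison function Y
  have hacm : α * (cm - u₁) = arcoth (2 * α * r u₁) := by
    rw [hcm]; field_simp; ring
  have hacp : α * (cp - u₁) = arcoth (2 * α * r u₁ / K) := by
    rw [hcp]; field_simp; ring
  have hcmpos : ∀ u ∈ Icc (0:ℝ) u₁, 0 < α * (cm - u) := by
    intro u hu'
    have he : α * (cm - u) = α * (cm - u₁) + α * (u₁ - u) := by ring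
    have h1 : 0 < arcoth (2 * α * r u₁) := arcoth_pos h1lt
    have h2 : 0 ≤ α * (u₁ - u) := by
      have := hu'.2; nlinarith
    rw [he, hacm]; linarith
  have hcppos : ∀ u ∈ Icc (0:ℝ) u₁, 0 < α * (cp - u) := by
    intro u hu'
    have he : α * (cp - u) = α * (cp - u₁) + α * (u₁ - u) := by ring
    have h1 : 0 < arcoth (2 * α * r u₁ / K) := arcoth_pos h1lt'
    have h2 : 0 ≤ α * (u₁ - u) := by
      have := hu'.2; nlinarith
    rw [he, hacp]; linarith
  set Y : ℝ → ℝ := fun v => 1 / (2 * α) * coth (α * (cm - v)) with hY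
  set Z : ℝ → ℝ := fun v => K / (2 * α) * coth (α * (cp - v)) with hZ
  have hYpos : ∀ u ∈ Icc (0:ℝ) u₁, 0 < Y u := by
    intro u hu'
    exact mul_pos (by positivity) (coth_pos (hcmpos u hu'))
  have hZpos : ∀ u ∈ Icc (0:ℝ) u₁, 0 < Z u := by
    intro u hu'
    exact mul_pos (by positivity) (coth_pos (hcppos u hu'))
  -- derivatives
  have hcothd : ∀ (c : ℝ) (u : ℝ), 0 < α * (c - u) →
      HasDerivAt (fun v => coth (α * (c - v))) ((1 - coth (α * (c - u)) ^ 2) * (-α)) u := by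
    intro c u htpos
    have hsne : Real.sinh (α * (c - u)) ≠ 0 := ne_of_gt (sinh_pos' htpos)
    have hinner : HasDerivAt (fun v => α * (c - v)) (-α) u := by
      simpa using ((hasDerivAt_id u).const_sub c).const_mul α
    exact (hasDerivAt_coth hsne).comp u hinner
  have hYd : ∀ u ∈ Icc (0:ℝ) u₁, HasDerivAt Y (2 * α ^ 2 * Y u ^ 2 - 1 / 2) u := by
    intro u hu'
    have h := (hcothd cm u (hcmpos u hu')).const_mul (1 / (2 * α))
    refine h.congr_deriv (Eq.symm ?_)
    simp only [hY]
    field_simp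
    ring
  have hZd : ∀ u ∈ Icc (0:ℝ) u₁, HasDerivAt Z (2 * α ^ 2 / K * Z u ^ 2 - K / 2) u := by
    intro u hu'
    have h := (hcothd cp u (hcppos u hu')).const_mul (K / (2 * α))
    refine h.congr_deriv (Eq.symm ?_)
    simp only [hZ]
    field_simp
    ring
  -- boundary values
  have hYb : Y u₁ = r u₁ := by
    simp only [hY]
    rw [hacm, coth_arcoth h1lt]
    field_simp
  have hZb : Z u₁ = r u₁ := by
    simp only [hZ]
    rw [hacp, coth_arcoth h1lt']
    field_simp
  -- translate the differential inequalities
  have key1 : ∀ u ∈ Icc (0:ℝ) u₁, r' u ≤ 2 * α ^ 2 * r u ^ 2 - 1 / 2 := by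
    intro u hu'
    have h := hhigh u hu'
    have e : Λ * K / 3 * r u ^ 2 = 4 * α ^ 2 * r u ^ 2 := by rw [← h4]
    nlinarith [h, e]
  have key2 : ∀ u ∈ Icc (0:ℝ) u₁, 2 * α ^ 2 / K * r u ^ 2 - K / 2 ≤ r' u := by
    intro u hu'
    have h := hlow u hu'
    have e : 2 * α ^ 2 / K * r u ^ 2 = Λ / 6 * r u ^ 2 := by
      have : 2 * α ^ 2 / K = Λ / 6 := by
        field_simp
        nlinarith [h4]
      rw [this]
    nlinarith [h, e]
  -- lower bound: apply Gronwall lemma to r - Y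
  have lower : ∀ u ∈ Icc (0:ℝ) u₁, 0 ≤ r u - Y u := by
    refine nonneg_of_deriv_le (h := fun v => r v - Y v) (h' := fun v => r' v - (2 * α ^ 2 * Y v ^ 2 - 1 / 2)) (C := 2 * α ^ 2 * |m| + 1) hu.le
      (fun u hu' => ((hd u hu').sub ((hYd u hu').hasDerivWithinAt)))
      ?_ (by show r u₁ - Y u₁ = 0; rw [hYb]; ring)
    intro u hu' hle
    have k1 := key1 u hu'
    have hYp := hYpos u hu'
    have hmu := hmle u hu'
    have habs : -|m| ≤ m := neg_abs_le m
    have hfac : 0 ≤ 2 * α ^ 2 * (r u + Y u) + (2 * α ^ 2 * |m| + 1) := by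
      nlinarith [sq_nonneg α]
    have hprod : (2 * α ^ 2 * (r u + Y u) + (2 * α ^ 2 * |m| + 1)) * (r u - Y u) ≤ 0 :=
      mul_nonpos_of_nonneg_of_nonpos hfac hle
    nlinarith [k1, hprod]
  -- upper bound: apply Gronwall lemma to Z - r
  have upper : ∀ u ∈ Icc (0:ℝ) u₁, 0 ≤ Z u - r u := by
    refine nonneg_of_deriv_le (h := fun v => Z v - r v) (h' := fun v => (2 * α ^ 2 / K * Z v ^ 2 - K / 2) - r' v) (C := 2 * α ^ 2 / K * |m| + 1) hu.le
      (fun u hu' => (((hZd u hu').hasDerivWithinAt).sub (hd u hu')))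
      ?_ (by show Z u₁ - r u₁ = 0; rw [hZb]; ring)
    intro u hu' hle
    have k2 := key2 u hu'
    have hZp := hZpos u hu'
    have hmu := hmle u hu'
    have habs : -|m| ≤ m := neg_abs_le m
    have hαK : 0 ≤ 2 * α ^ 2 / K := by positivity
    have hfac : 0 ≤ 2 * α ^ 2 / K * (Z u + r u) + (2 * α ^ 2 / K * |m| + 1) := by
      nlinarith [hαK]
    have hprod : (2 * α ^ 2 / K * (Z u + r u) + (2 * α ^ 2 / K * |m| + 1)) * (Z u - r u) ≤ 0 :=
      mul_nonpos_of_nonneg_of_nonpos hfac hle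
    nlinarith [k2, hprod]
  intro u hu'
  have h1 := lower u hu'
  have h2 := upper u hu'
  constructor
  · simp only [hY] at h1; linarith
  · simp only [hZ] at h2; linarith
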